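/- For all integers g ≥ 2 and n ≥ 0, g(g-1)·N^{FLS}_{g,n} = (n+g-1)·N_{g,n}. Here N_{g,n} = g · Σ_{(k_1,…,k_{g-1}) ∈ ℤ_{>0}^{g-1}, Σ k_i = n+g-1} ∏_{i=1}^{g-1} k_i σ(k_i) and N^{FLS}_{g,n} = Σ_{(k_1,…,k_{g-1}) ∈ ℤ_{>0}^{g-1}, Σ k_i = n+g-1} k_{g-1}² σ(k_{g-1}) ∏_{i=1}^{g-2} k_i σ(k_i). -/
import Mathlib


open Finset

/-- σ(k): the sum of the positive divisors of `k`, as a rational number. -/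
noncomputable def sigma' (k : ℕ) : ℚ := ∑ d ∈ k.divisors, (d : ℚ)

/-- `N g n = g · Σ_{(k₁,…,k_{g-1}) ∈ ℤ_{>0}^{g-1}, Σ kᵢ = n+g-1} ∏ᵢ kᵢ σ(kᵢ)`. -/
noncomputable def N (g n : ℕ) : ℚ :=
  (g : ℚ) *
    ∑ k ∈ (Finset.Nat.antidiagonalTuple (g - 1) (n + g - 1)).filter (fun k => ∀ i, 0 < k i),
      ∏ i, (k i : ℚ) * sigma' (k i)

/-- `g(g-1)·N^{FLS}_{g,n} = (n+g-1)·N_{g,n}`, where `N^{FLS}_{g,n}` is the sum over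
positive `(g-1)`-tuples `(k₁,…,k_{g-1})` with `Σ kᵢ = n+g-1` of
`k_{g-1}² σ(k_{g-1}) ∏_{i=1}^{g-2} kᵢ σ(kᵢ)`. -/
theorem stmt_6 (g n : ℕ) (hg : 2 ≤ g) :
    (g : ℚ) * ((g : ℚ) - 1) *
      (∑ k ∈ (Finset.Nat.antidiagonalTuple (g - 1) (n + g - 1)).filter (fun k => ∀ i, 0 < k i),
        ((k ⟨g - 2, by omega⟩ : ℚ) ^ 2 * sigma' (k ⟨g - 2, by omega⟩)) *
          ∏ i ∈ Finset.univ.erase (⟨g - 2, by omega⟩ : Fin (g - 1)),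
            (k i : ℚ) * sigma' (k i)) =
    ((n : ℚ) + (g : ℚ) - 1) * N g n := by
  
  have hj : g - 2 < g - 1 := by omega
  set j₀ : Fin (g-1) := ⟨g-2, hj⟩ with hj₀
  set A := (Finset.Nat.antidiagonalTuple (g - 1) (n + g - 1)).filter (fun k => ∀ i, 0 < k i) with hA
  have step1 : ∀ k : Fin (g-1) → ℕ,
      ((k j₀ : ℚ) ^ 2 * sigma' (k j₀)) * ∏ i ∈ Finset.univ.erase j₀, (k i : ℚ) * sigma' (k i)
      = (k j₀ : ℚ) * ∏ i, (k i : ℚ) * sigma' (k i) := by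
    intro k
    rw [← Finset.mul_prod_erase Finset.univ (fun i => (k i : ℚ) * sigma' (k i)) (Finset.mem_univ j₀)]
    ring
  have memA : ∀ σ : Equiv.Perm (Fin (g-1)), ∀ k ∈ A, (k ∘ σ) ∈ A := by
    intro σ k hk
    simp only [hA, Finset.mem_filter, Finset.Nat.mem_antidiagonalTuple] at hk ⊢
    refine ⟨?_, fun i => hk.2 (σ i)⟩
    rw [← hk.1]
    exact Equiv.sum_comp σ k
  have step2 : ∀ j : Fin (g-1),
      ∑ k ∈ A, (k j : ℚ) * ∏ i, (k i : ℚ) * sigma' (k i)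
      = ∑ k ∈ A, (k j₀ : ℚ) * ∏ i, (k i : ℚ) * sigma' (k i) := by
    intro j
    refine Finset.sum_nbij' (fun k => k ∘ Equiv.swap j j₀) (fun k => k ∘ Equiv.swap j j₀)
      (memA _) (memA _) ?_ ?_ ?_
    · intro k _; funext i; simp [Function.comp, Equiv.swap_apply_self]
    · intro k _; funext i; simp [Function.comp, Equiv.swap_apply_self]
    · intro k _
      have h1 : ((k ∘ Equiv.swap j j₀) j₀ : ℚ) = (k j : ℚ) := by
        simp [Function.comp, Equiv.swap_apply_right]
      rw [h1]
      congr 1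
      exact (Equiv.prod_comp (Equiv.swap j j₀) (fun x => (k x : ℚ) * sigma' (k x))).symm
  have hsum : ∀ k ∈ A, ((n + g - 1 : ℕ) : ℚ) = ∑ j, (k j : ℚ) := by
    intro k hk
    simp only [hA, Finset.mem_filter, Finset.Nat.mem_antidiagonalTuple] at hk
    rw [← hk.1]; push_cast; ring
  have step3 : ((n + g - 1 : ℕ) : ℚ) * ∑ k ∈ A, ∏ i, (k i : ℚ) * sigma' (k i)
      = ((g:ℚ) - 1) * ∑ k ∈ A, (k j₀ : ℚ) * ∏ i, (k i : ℚ) * sigma' (k i) := by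
    rw [Finset.mul_sum]
    calc ∑ k ∈ A, ((n + g - 1 : ℕ) : ℚ) * ∏ i, (k i : ℚ) * sigma' (k i)
        = ∑ k ∈ A, ∑ j, (k j : ℚ) * ∏ i, (k i : ℚ) * sigma' (k i) := by
          refine Finset.sum_congr rfl fun k hk => ?_
          rw [hsum k hk, Finset.sum_mul]
      _ = ∑ j, ∑ k ∈ A, (k j : ℚ) * ∏ i, (k i : ℚ) * sigma' (k i) := Finset.sum_comm
      _ = ∑ j : Fin (g-1), ∑ k ∈ A, (k j₀ : ℚ) * ∏ i, (k i : ℚ) * sigma' (k i) := by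
          exact Finset.sum_congr rfl fun j _ => step2 j
      _ = ((g:ℚ) - 1) * ∑ k ∈ A, (k j₀ : ℚ) * ∏ i, (k i : ℚ) * sigma' (k i) := by
          rw [Finset.sum_const, Finset.card_univ, Fintype.card_fin, nsmul_eq_mul]
          congr 1
          have : (1:ℕ) ≤ g - 1 := by omega
          push_cast [Nat.cast_sub (by omega : 1 ≤ g)]
          ring
  have hcast : ((n + g - 1 : ℕ) : ℚ) = (n : ℚ) + (g : ℚ) - 1 := by
    push_cast [Nat.cast_sub (by omega : 1 ≤ n + g)]; ring
  calc (g : ℚ) * ((g : ℚ) - 1) *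
      (∑ k ∈ A, ((k j₀ : ℚ) ^ 2 * sigma' (k j₀)) *
          ∏ i ∈ Finset.univ.erase j₀, (k i : ℚ) * sigma' (k i))
      = (g : ℚ) * (((g:ℚ) - 1) * ∑ k ∈ A, (k j₀ : ℚ) * ∏ i, (k i : ℚ) * sigma' (k i)) := by
        rw [Finset.sum_congr rfl fun k _ => step1 k]; ring
    _ = (g : ℚ) * (((n + g - 1 : ℕ) : ℚ) * ∑ k ∈ A, ∏ i, (k i : ℚ) * sigma' (k i)) := by
        rw [step3]
    _ = ((n : ℚ) + (g : ℚ) - 1) * N g n := by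
        rw [hcast, N]; ring
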